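/- Suppose λ and κ are infinite cardinals with λ < κ. If Fr_λ(κ, ℵ₀) holds (every algebra of cardinality κ with at most λ operations has a countably infinite free subset), then there is no Artinian algebra of cardinality ≥ κ with signature of size at most λ. -/

import Mathlib

universe u

structure Alg (ι : Type u) (M : Type u) where
  arity : ι → ℕ
  op : (i : ι) → (Fin (arity i) → M) → M

namespace Alg

variable {ι M : Type u}

/-- A set is closed under all operations of the algebra. -/
def Closed (A : Alg ι M) (S : Set M) : Prop :=
  ∀ (i : ι) (x : Fin (A.arity i) → M), (∀ k, x k ∈ S) → A.op i x ∈ S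

/-- Membership in the subalgebra generated by `X`. -/
inductive cl (A : Alg ι M) (X : Set M) : M → Prop
  | base {m : M} (h : m ∈ X) : cl A X m
  | op (i : ι) (x : Fin (A.arity i) → M) (h : ∀ k, cl A X (x k)) : cl A X (A.op i x)

/-- A subset is free if no element lies in the subalgebra generated by the others. -/
def Free (A : Alg ι M) (X : Set M) : Prop :=
  ∀ x ∈ X, ¬ A.cl (X \ {x}) x

/-- An algebra is Artinian if there is no infinite strictly descending chain of
(nonempty closed) subalgebras. -/
def Artinian (A : Alg ι M) : Prop :=
  ¬ ∃ S : ℕ → Set M, (∀ n, (S n).Nonempty ∧ A.Closed (S n)) ∧ ∀ n, S (n + 1) ⊂ S n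

end Alg

open Cardinal

namespace Alg

open FirstOrder

variable {ι M : Type u}

/-- The first-order language associated to an algebra's signature. -/
def lang (A : Alg ι M) : FirstOrder.Language.{u, u} where
  Functions n := {i : ι // A.arity i = n}
  Relations _ := PEmpty

/-- The structure on `M` for the language of `A`. -/
def str (A : Alg ι M) : A.lang.Structure M where
  funMap f x := A.op f.1 (fun k => x (Fin.cast f.2 k))
  RelMap r := r.elim

lemma cl_mono {A : Alg ι M} {X X' : Set M} (hXX : X ⊆ X') {m : M} (h : A.cl X m) :
    A.cl X' m := by
  induction h with
  | base h => exact .base (hXX h)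
  | op i x _ ih => exact .op i x ih

lemma mem_closure_iff_cl (A : Alg ι M) (X : Set M) (m : M) :
    letI := A.str
    m ∈ Language.Substructure.closure A.lang X ↔ A.cl X m := by
  letI := A.str
  constructor
  · intro h
    refine (Language.Substructure.closure_le
      (S := ⟨{m | A.cl X m}, ?_⟩)).2 (fun y hy => Alg.cl.base hy) h
    intro n f x hx
    exact Alg.cl.op f.1 (fun k => x (Fin.cast f.2 k)) (fun k => hx _)
  · intro h
    induction h with
    | base h => exact Language.Substructure.subset_closure h
    | op i x _ ih =>
      exact (Language.Substructure.closure A.lang X).fun_mem (⟨i, rfl⟩ : A.lang.Functions _) x ih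

/-- Restriction of an algebra to a closed subset. -/
def subAlg (A : Alg ι M) (P : Set M) (hP : A.Closed P) : Alg ι ↥P where
  arity := A.arity
  op i x := ⟨A.op i (fun k => (x k).1), hP i _ (fun k => (x k).2)⟩

lemma cl_image_val {A : Alg ι M} {P : Set M} (hP : A.Closed P) {Z : Set ↥P} {m : M}
    (h : A.cl (Subtype.val '' Z) m) : ∃ hm : m ∈ P, (A.subAlg P hP).cl Z ⟨m, hm⟩ := by
  induction h with
  | base hm =>
    obtain ⟨z, hz, rfl⟩ := hm
    exact ⟨z.2, .base hz⟩
  | op i x h ih =>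
    choose hm hc using ih
    refine ⟨hP i x hm, ?_⟩
    have h2 : (A.subAlg P hP).cl Z ((A.subAlg P hP).op i (fun k => ⟨x k, hm k⟩)) :=
      Alg.cl.op i _ hc
    exact h2

end Alg

/-- If λ < κ are infinite cardinals and Fr_λ(κ, ℵ₀) holds (every algebra
of cardinality κ with at most λ operations has an infinite free subset), then there is
no Artinian algebra of cardinality ≥ κ with signature of size at most λ. -/
theorem stmt7 (lam κ : Cardinal.{u}) (hlam : ℵ₀ ≤ lam) (hlt : lam < κ)
    (hFr : ∀ (ι M : Type u) (A : Alg ι M), #ι ≤ lam → #M = κ →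
      ∃ X : Set M, X.Infinite ∧ A.Free X) :
    ∀ (ι M : Type u) (A : Alg ι M), #ι ≤ lam → κ ≤ #M → ¬ A.Artinian := by
  intro ι M A hι hκM hart
  letI := A.str
  have hkinf : ℵ₀ ≤ κ := hlam.trans hlt.le
  -- choose a set X of cardinality κ
  obtain ⟨e⟩ : Nonempty (κ.out ↪ M) := by
    rw [← Cardinal.le_def, Cardinal.mk_out]; exact hκM
  set X : Set M := Set.range e with hX
  have hXκ : #X = κ := by rw [hX, Cardinal.mk_range_eq _ e.injective, Cardinal.mk_out]
  -- the subalgebra generated by X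
  set M₀ := FirstOrder.Language.Substructure.closure A.lang X with hM₀
  have hcard : #M₀ = κ := by
    apply le_antisymm
    · have h1 := FirstOrder.Language.Substructure.lift_card_closure_le (L := A.lang) (M := M) (s := X)
      rw [Cardinal.lift_id, Cardinal.lift_id, Cardinal.lift_id] at h1
      have h2 : #(Σ n, A.lang.Functions n) = #ι :=
        Cardinal.mk_congr (Equiv.sigmaFiberEquiv A.arity)
      rw [h2, hXκ] at h1
      refine h1.trans ?_
      rw [Cardinal.add_eq_left hkinf (hι.trans hlt.le)]
      exact max_le hkinf le_rfl
    · rw [← hXκ]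
      exact Cardinal.mk_le_mk_of_subset (FirstOrder.Language.Substructure.subset_closure)
  -- M₀ is closed
  have hP : A.Closed (M₀ : Set M) := by
    intro i x hx
    exact M₀.fun_mem (⟨i, rfl⟩ : A.lang.Functions _) x hx
  set A₀ := A.subAlg (M₀ : Set M) hP with hA₀
  obtain ⟨Y, hYinf, hYfree⟩ := hFr ι (M₀ : Set M) A₀ hι hcard
  -- enumerate Y
  set emb : ℕ ↪ ↥Y := Set.Infinite.natEmbedding Y hYinf with hemb
  set g : ℕ → ↥(M₀ : Set M) := fun n => (emb n : ↥(M₀ : Set M)) with hg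
  have hgY : ∀ n, g n ∈ Y := fun n => (emb n).2
  have hginj : Function.Injective g :=
    fun a b h => emb.injective (Subtype.ext h)
  -- the descending chain
  set S : ℕ → Set M := fun n => {m | A.cl (Subtype.val '' (Y \ g '' Set.Iio n)) m} with hS
  have hmem : ∀ n, (g n : M) ∈ S n := by
    intro n
    refine Alg.cl.base ⟨g n, ⟨hgY n, ?_⟩, rfl⟩
    rintro ⟨m, hm, hgm⟩
    exact absurd (hginj hgm) (Nat.ne_of_lt hm)
  have hnotmem : ∀ n, (g n : M) ∉ S (n + 1) := by
    intro n hn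
    have h1 : A.cl (Subtype.val '' (Y \ {g n})) (g n : M) := by
      refine Alg.cl_mono ?_ hn
      apply Set.image_mono
      intro y hy
      exact ⟨hy.1, fun h => hy.2 ⟨n, Nat.lt_succ_self n, (h : y = g n).symm ▸ rfl⟩⟩
    obtain ⟨hm, hc⟩ := Alg.cl_image_val hP h1
    exact hYfree (g n) (hgY n) hc
  refine hart ⟨S, fun n => ⟨⟨g n, hmem n⟩, fun i x hx => Alg.cl.op i x hx⟩, fun n => ?_⟩
  constructor
  · intro m hm
    refine Alg.cl_mono ?_ hm
    apply Set.image_mono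
    exact Set.diff_subset_diff_right (Set.image_mono (Set.Iio_subset_Iio (Nat.le_succ n)))
  · intro hsub
    exact hnotmem n (hsub (hmem n))
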